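/- Let G be a finite simple graph and f a uniformly random labeling with fixed label counts. For pairwise distinct labels i, j, k, Cov(R_{ij}, R_{ik}) = (sum_t |G_t|^2 - 2|G|) * n_i n_j n_k/(N(N-1)(N-2)) + (|G|^2 - sum_t |G_t|^2 + |G|) * 4 n_i n_j n_k (n_i - 1)/(N(N-1)(N-2)(N-3)) - E(R_{ij}) E(R_{ik}). -/

import Mathlib

set_option linter.unusedSectionVars false
set_option maxHeartbeats 1000000


open Finset

variable {V : Type*} [Fintype V] [DecidableEq V] {K : ℕ}

/-- The set of labelings `f : V → Fin K` with exactly `n k` vertices labeled `k`. -/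
def labelings (n : Fin K → ℕ) : Finset (V → Fin K) :=
  Finset.univ.filter fun f => ∀ k, (Finset.univ.filter fun x => f x = k).card = n k

/-- Probability of an event under the uniform distribution on `labelings n`. -/
noncomputable def prob (n : Fin K → ℕ) (P : (V → Fin K) → Prop) [DecidablePred P] : ℝ :=
  (((labelings n).filter P).card : ℝ) / (((labelings n : Finset (V → Fin K))).card : ℝ)

/-- Expectation of a real random variable under the uniform distribution on `labelings n`. -/
noncomputable def expect (n : Fin K → ℕ) (X : (V → Fin K) → ℝ) : ℝ :=
  (∑ f ∈ labelings n, X f) / (((labelings n : Finset (V → Fin K))).card : ℝ)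

/-- Covariance under the uniform distribution on `labelings n`. -/
noncomputable def covar (n : Fin K → ℕ) (X Y : (V → Fin K) → ℝ) : ℝ :=
  expect n (fun f => (X f - expect n X) * (Y f - expect n Y))

/-- `Rcount G f i j` is the number of edges of `G` whose endpoint labels (under `f`)
are exactly the unordered pair `{i, j}`. -/
def Rcount (G : SimpleGraph V) [DecidableRel G.Adj] (f : V → Fin K) (i j : Fin K) : ℕ :=
  (G.edgeFinset.filter fun e => Sym2.map f e = s(i, j)).card





lemma mem_labelings {n : Fin K → ℕ} {f : V → Fin K} :
    f ∈ (labelings n : Finset (V → Fin K)) ↔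
      ∀ k, (Finset.univ.filter fun x => f x = k).card = n k := by
  simp [labelings]

lemma labelings_nonempty {n : Fin K → ℕ} (hsum : ∑ k, n k = Fintype.card V) :
    (labelings n : Finset (V → Fin K)).Nonempty := by
  have hcard : Fintype.card (Σ k : Fin K, Fin (n k)) = Fintype.card V := by
    simp [Fintype.card_sigma, hsum]
  obtain ⟨e⟩ := Fintype.card_eq.mp hcard.symm
  refine ⟨fun x => (e x).1, mem_labelings.mpr fun c => ?_⟩
  have : (Finset.univ.filter fun x : V => (e x).1 = c) =
      (Finset.univ.filter fun s : Σ k : Fin K, Fin (n k) => s.1 = c).map e.symm.toEmbedding := by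
    ext x
    simp only [Finset.mem_filter, Finset.mem_map, Finset.mem_univ, true_and,
      Equiv.toEmbedding_apply, Equiv.symm_apply_eq]
    constructor
    · intro h; exact ⟨e x, h, by simp⟩
    · rintro ⟨s, h1, rfl⟩; simpa using h1
  rw [this, Finset.card_map]
  have : (Finset.univ.filter fun s : Σ k : Fin K, Fin (n k) => s.1 = c) =
      Finset.univ.map ⟨fun y : Fin (n c) => (⟨c, y⟩ : Σ k : Fin K, Fin (n k)), by
        intro a b h; simpa using h⟩ := by
    ext ⟨k', y⟩
    simp only [Finset.mem_filter, Finset.mem_univ, true_and, Finset.mem_map,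
      Function.Embedding.coeFn_mk]
    constructor
    · rintro rfl; exact ⟨y, rfl⟩
    · rintro ⟨a, h⟩
      exact congrArg Sigma.fst h.symm
  rw [this]; simp

lemma comp_mem_labelings {n : Fin K → ℕ} {f : V → Fin K} (σ : Equiv.Perm V)
    (hf : f ∈ (labelings n : Finset (V → Fin K))) :
    (f ∘ σ) ∈ (labelings n : Finset (V → Fin K)) := by
  rw [mem_labelings] at hf ⊢
  intro c
  rw [← hf c]
  apply Finset.card_nbij' (fun x => σ x) (fun x => σ.symm x) <;> intro x hx <;> simp_all

lemma card_filter_comp {n : Fin K → ℕ} (σ : Equiv.Perm V) (p : (V → Fin K) → Prop)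
    [DecidablePred p] :
    ((labelings n : Finset (V → Fin K)).filter fun f => p (f ∘ σ)).card
      = ((labelings n : Finset (V → Fin K)).filter p).card := by
  apply Finset.card_nbij' (fun f => f ∘ σ) (fun g => g ∘ σ.symm)
  · intro f hf
    simp only [Finset.mem_coe, Finset.mem_filter] at hf ⊢
    exact ⟨comp_mem_labelings σ hf.1, hf.2⟩
  · intro g hg
    simp only [Finset.mem_coe, Finset.mem_filter] at hg ⊢
    constructor
    · exact comp_mem_labelings σ.symm hg.1
    · have : (g ∘ σ.symm) ∘ σ = g := by ext x; simp
      rw [this]; exact hg.2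
  · intro f _; ext x; simp
  · intro g _; ext x; simp

lemma exists_perm {r : ℕ} (a b : Fin r → V) (ha : Function.Injective a)
    (hb : Function.Injective b) : ∃ σ : Equiv.Perm V, ∀ s, σ (a s) = b s := by
  classical
  have hcard : Fintype.card (↥(Set.range a)ᶜ) = Fintype.card (↥(Set.range b)ᶜ) := by
    rw [Fintype.card_compl_set, Fintype.card_compl_set,
      Set.card_range_of_injective ha, Set.card_range_of_injective hb]
  let ea : Fin r ≃ Set.range a := Equiv.ofInjective a ha
  let eb : Fin r ≃ Set.range b := Equiv.ofInjective b hb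
  let ec : ↥(Set.range a)ᶜ ≃ ↥(Set.range b)ᶜ := Fintype.equivOfCardEq hcard
  let σ : V ≃ V := (Equiv.Set.sumCompl (Set.range a)).symm.trans
      ((Equiv.sumCongr (ea.symm.trans eb) ec).trans (Equiv.Set.sumCompl (Set.range b)))
  refine ⟨σ, fun s => ?_⟩
  have h1 : (Equiv.Set.sumCompl (Set.range a)).symm (a s) =
      Sum.inl ⟨a s, Set.mem_range_self s⟩ :=
    Equiv.Set.sumCompl_symm_apply_of_mem _
  simp only [σ, Equiv.trans_apply, h1, Equiv.sumCongr_apply, Sum.map_inl]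
  have h2 : ea.symm ⟨a s, Set.mem_range_self s⟩ = s := by
    apply ea.injective; simp [ea]
  rw [h2]
  simp [eb]

lemma card_offDiag' {α : Type*} [DecidableEq α] (s : Finset α) :
    s.offDiag.card = s.card * (s.card - 1) := by
  rw [Finset.offDiag_card]
  rcases h : s.card with _ | t
  · rfl
  · simp [Nat.mul_succ]

lemma inj2 {a b : V} (hab : a ≠ b) : Function.Injective ![a, b] := by
  intro s t h
  fin_cases s <;> fin_cases t <;> simp_all

lemma inj3 {a b c : V} (hab : a ≠ b) (hac : a ≠ c) (hbc : b ≠ c) :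
    Function.Injective ![a, b, c] := by
  intro s t h
  fin_cases s <;> fin_cases t <;> simp_all

lemma inj4 {a b c d : V} (hab : a ≠ b) (hac : a ≠ c) (had : a ≠ d) (hbc : b ≠ c)
    (hbd : b ≠ d) (hcd : c ≠ d) : Function.Injective ![a, b, c, d] := by
  intro s t h
  fin_cases s <;> fin_cases t <;> simp_all

lemma card_triples (s : Finset V) :
    ((s ×ˢ s ×ˢ s).filter fun p => p.1 ≠ p.2.1 ∧ p.1 ≠ p.2.2 ∧ p.2.1 ≠ p.2.2).card
      = s.card * ((s.card - 1) * (s.card - 2)) := by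
  rw [Finset.card_eq_sum_card_fiberwise (f := fun p => p.1) (t := s)
    (fun p hp => by simp only [Finset.mem_coe, Finset.mem_filter, Finset.mem_product] at hp; exact hp.1.1)]
  have h : ∀ a ∈ s, (((s ×ˢ s ×ˢ s).filter fun p =>
      p.1 ≠ p.2.1 ∧ p.1 ≠ p.2.2 ∧ p.2.1 ≠ p.2.2).filter fun p => p.1 = a).card
      = (s.erase a).offDiag.card := by
    intro a ha
    apply Finset.card_nbij' (fun p => p.2) (fun q => (a, q))
    · intro p hp
      simp only [Finset.mem_coe, Finset.mem_filter, Finset.mem_product] at hp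
      obtain ⟨⟨⟨h1, h2, h3⟩, h4, h5, h6⟩, rfl⟩ := hp
      simp only [Finset.mem_coe, Finset.mem_offDiag, Finset.mem_erase]
      exact ⟨⟨Ne.symm h4, h2⟩, ⟨Ne.symm h5, h3⟩, h6⟩
    · intro q hq
      simp only [Finset.mem_coe, Finset.mem_offDiag, Finset.mem_erase] at hq
      simp only [Finset.mem_coe, Finset.mem_filter, Finset.mem_product]
      exact ⟨⟨⟨ha, hq.1.2, hq.2.1.2⟩, Ne.symm hq.1.1, Ne.symm hq.2.1.1, hq.2.2⟩, trivial⟩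
    · intro p hp
      simp only [Finset.mem_coe, Finset.mem_filter] at hp
      rw [← hp.2]
    · intro q _
      rfl
  rw [Finset.sum_congr rfl h]
  have h2 : ∀ a ∈ s, (s.erase a).offDiag.card = (s.card - 1) * (s.card - 2) := by
    intro a ha
    rw [card_offDiag', Finset.card_erase_of_mem ha, Nat.sub_sub]
  rw [Finset.sum_congr rfl h2, Finset.sum_const, smul_eq_mul]

lemma card_quads (s : Finset V) :
    ((s ×ˢ s ×ˢ s ×ˢ s).filter fun p => p.1 ≠ p.2.1 ∧ p.1 ≠ p.2.2.1 ∧ p.1 ≠ p.2.2.2 ∧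
      p.2.1 ≠ p.2.2.1 ∧ p.2.1 ≠ p.2.2.2 ∧ p.2.2.1 ≠ p.2.2.2).card
      = s.card * ((s.card - 1) * ((s.card - 2) * (s.card - 3))) := by
  rw [Finset.card_eq_sum_card_fiberwise (f := fun p => p.1) (t := s)
    (fun p hp => by simp only [Finset.mem_coe, Finset.mem_filter, Finset.mem_product] at hp; exact hp.1.1)]
  have h : ∀ a ∈ s, (((s ×ˢ s ×ˢ s ×ˢ s).filter fun p =>
      p.1 ≠ p.2.1 ∧ p.1 ≠ p.2.2.1 ∧ p.1 ≠ p.2.2.2 ∧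
      p.2.1 ≠ p.2.2.1 ∧ p.2.1 ≠ p.2.2.2 ∧ p.2.2.1 ≠ p.2.2.2).filter fun p => p.1 = a).card
      = (((s.erase a) ×ˢ (s.erase a) ×ˢ (s.erase a)).filter fun q =>
          q.1 ≠ q.2.1 ∧ q.1 ≠ q.2.2 ∧ q.2.1 ≠ q.2.2).card := by
    intro a ha
    apply Finset.card_nbij' (fun p => p.2) (fun q => (a, q))
    · intro p hp
      simp only [Finset.mem_coe, Finset.mem_filter, Finset.mem_product, Finset.mem_erase] at hp ⊢
      obtain ⟨⟨⟨h1, h2, h3, h4⟩, d1, d2, d3, d4, d5, d6⟩, rfl⟩ := hp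
      exact ⟨⟨⟨Ne.symm d1, h2⟩, ⟨Ne.symm d2, h3⟩, Ne.symm d3, h4⟩, d4, d5, d6⟩
    · intro q hq
      simp only [Finset.mem_coe, Finset.mem_filter, Finset.mem_product, Finset.mem_erase] at hq ⊢
      obtain ⟨⟨⟨e1, m1⟩, ⟨e2, m2⟩, e3, m3⟩, d1, d2, d3⟩ := hq
      exact ⟨⟨⟨ha, m1, m2, m3⟩, Ne.symm e1, Ne.symm e2, Ne.symm e3, d1, d2, d3⟩, trivial⟩
    · intro p hp
      simp only [Finset.mem_coe, Finset.mem_filter] at hp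
      rw [← hp.2]
    · intro q _
      rfl
  rw [Finset.sum_congr rfl h]
  have h2 : ∀ a ∈ s, (((s.erase a) ×ˢ (s.erase a) ×ˢ (s.erase a)).filter fun q =>
      q.1 ≠ q.2.1 ∧ q.1 ≠ q.2.2 ∧ q.2.1 ≠ q.2.2).card
      = (s.card - 1) * ((s.card - 2) * (s.card - 3)) := by
    intro a ha
    rw [card_triples, Finset.card_erase_of_mem ha, Nat.sub_sub, Nat.sub_sub]
  rw [Finset.sum_congr rfl h2, Finset.sum_const, smul_eq_mul]

lemma ne_of_labels {f : V → Fin K} {x y : V} {c d : Fin K}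
    (hx : f x = c) (hy : f y = d) (hcd : c ≠ d) : x ≠ y :=
  fun e => hcd (by rw [← hx, ← hy, e])

lemma count2 {n : Fin K → ℕ} {f : V → Fin K} (hf : f ∈ (labelings n : Finset (V → Fin K)))
    {i j : Fin K} (hij : i ≠ j) :
    (((univ ×ˢ univ : Finset (V × V)).filter fun p => p.1 ≠ p.2).filter
      fun p => f p.1 = i ∧ f p.2 = j).card = n i * n j := by
  rw [Finset.filter_filter]
  have h : ((univ ×ˢ univ : Finset (V × V)).filter fun p => p.1 ≠ p.2 ∧ (f p.1 = i ∧ f p.2 = j))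
      = (univ.filter fun x => f x = i) ×ˢ (univ.filter fun x => f x = j) := by
    ext ⟨a, b⟩
    simp only [Finset.mem_filter, Finset.mem_product, Finset.mem_univ, true_and]
    constructor
    · rintro ⟨-, h⟩; exact h
    · rintro ⟨h1, h2⟩; exact ⟨ne_of_labels h1 h2 hij, h1, h2⟩
  rw [h, Finset.card_product, mem_labelings.mp hf i, mem_labelings.mp hf j]

lemma count3 {n : Fin K → ℕ} {f : V → Fin K} (hf : f ∈ (labelings n : Finset (V → Fin K)))
    {i j k : Fin K} (hij : i ≠ j) (hik : i ≠ k) (hjk : j ≠ k) :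
    (((univ ×ˢ univ ×ˢ univ : Finset (V × V × V)).filter fun p =>
        p.1 ≠ p.2.1 ∧ p.1 ≠ p.2.2 ∧ p.2.1 ≠ p.2.2).filter
      fun p => f p.1 = i ∧ f p.2.1 = j ∧ f p.2.2 = k).card = n i * (n j * n k) := by
  rw [Finset.filter_filter]
  have h : ((univ ×ˢ univ ×ˢ univ : Finset (V × V × V)).filter fun p =>
        (p.1 ≠ p.2.1 ∧ p.1 ≠ p.2.2 ∧ p.2.1 ≠ p.2.2) ∧
        (f p.1 = i ∧ f p.2.1 = j ∧ f p.2.2 = k))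
      = (univ.filter fun x => f x = i) ×ˢ
          ((univ.filter fun x => f x = j) ×ˢ (univ.filter fun x => f x = k)) := by
    ext ⟨a, b, c⟩
    simp only [Finset.mem_filter, Finset.mem_product, Finset.mem_univ, true_and]
    constructor
    · rintro ⟨-, h⟩; exact ⟨h.1, h.2.1, h.2.2⟩
    · rintro ⟨h1, h2, h3⟩
      exact ⟨⟨ne_of_labels h1 h2 hij, ne_of_labels h1 h3 hik, ne_of_labels h2 h3 hjk⟩,
        h1, h2, h3⟩
  rw [h, Finset.card_product, Finset.card_product,
    mem_labelings.mp hf i, mem_labelings.mp hf j, mem_labelings.mp hf k]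

lemma count4 {n : Fin K → ℕ} {f : V → Fin K} (hf : f ∈ (labelings n : Finset (V → Fin K)))
    {i j k : Fin K} (hij : i ≠ j) (hik : i ≠ k) (hjk : j ≠ k) :
    (((univ ×ˢ univ ×ˢ univ ×ˢ univ : Finset (V × V × V × V)).filter fun p =>
        p.1 ≠ p.2.1 ∧ p.1 ≠ p.2.2.1 ∧ p.1 ≠ p.2.2.2 ∧
        p.2.1 ≠ p.2.2.1 ∧ p.2.1 ≠ p.2.2.2 ∧ p.2.2.1 ≠ p.2.2.2).filter
      fun p => f p.1 = i ∧ f p.2.1 = j ∧ f p.2.2.1 = i ∧ f p.2.2.2 = k).card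
      = (n i * (n i - 1)) * (n j * n k) := by
  rw [Finset.filter_filter]
  have h : (((univ ×ˢ univ ×ˢ univ ×ˢ univ : Finset (V × V × V × V)).filter fun p =>
        (p.1 ≠ p.2.1 ∧ p.1 ≠ p.2.2.1 ∧ p.1 ≠ p.2.2.2 ∧
        p.2.1 ≠ p.2.2.1 ∧ p.2.1 ≠ p.2.2.2 ∧ p.2.2.1 ≠ p.2.2.2) ∧
        (f p.1 = i ∧ f p.2.1 = j ∧ f p.2.2.1 = i ∧ f p.2.2.2 = k))).card
      = ((univ.filter fun x => f x = i).offDiag ×ˢ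
          ((univ.filter fun x => f x = j) ×ˢ (univ.filter fun x => f x = k))).card := by
    apply Finset.card_nbij' (fun p => ((p.1, p.2.2.1), p.2.1, p.2.2.2))
      (fun q => (q.1.1, q.2.1, q.1.2, q.2.2))
    · intro p hp
      simp only [Finset.mem_coe, Finset.mem_filter, Finset.mem_product, Finset.mem_univ, true_and,
        Finset.mem_offDiag] at hp ⊢
      obtain ⟨⟨d1, d2, d3, d4, d5, d6⟩, l1, l2, l3, l4⟩ := hp
      exact ⟨⟨l1, l3, d2⟩, l2, l4⟩
    · intro q hq
      simp only [Finset.mem_coe, Finset.mem_filter, Finset.mem_product, Finset.mem_univ, true_and,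
        Finset.mem_offDiag] at hq ⊢
      obtain ⟨⟨l1, l3, d⟩, l2, l4⟩ := hq
      refine ⟨⟨ne_of_labels l1 l2 hij, d, ne_of_labels l1 l4 hik,
        ne_of_labels l2 l3 (Ne.symm hij), ne_of_labels l2 l4 hjk,
        ne_of_labels l3 l4 hik⟩, l1, l2, l3, l4⟩
    · intro p _; rfl
    · intro q _; rfl
  rw [h, Finset.card_product, Finset.card_product, card_offDiag',
    mem_labelings.mp hf i, mem_labelings.mp hf j, mem_labelings.mp hf k]

lemma key2 (n : Fin K → ℕ) {a b : V} (hab : a ≠ b) {i j : Fin K} (hij : i ≠ j) :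
    (Fintype.card V * (Fintype.card V - 1)) *
      ((labelings n).filter fun f : V → Fin K => f a = i ∧ f b = j).card
      = (labelings n : Finset (V → Fin K)).card * (n i * n j) := by
  classical
  set L := (labelings n : Finset (V → Fin K)) with hL
  set D2 := ((univ ×ˢ univ : Finset (V × V)).filter fun p => p.1 ≠ p.2) with hD2
  have hcard : D2.card = Fintype.card V * (Fintype.card V - 1) := by
    have h : D2 = (univ : Finset V).offDiag := by
      ext p; simp [hD2, Finset.mem_offDiag]
    rw [h, card_offDiag', Finset.card_univ]
  have hconst : ∀ p ∈ D2, ((L.filter fun f => f p.1 = i ∧ f p.2 = j).card)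
      = (L.filter fun f => f a = i ∧ f b = j).card := by
    intro p hp
    have hp' : p.1 ≠ p.2 := by
      simp only [hD2, Finset.mem_filter] at hp; exact hp.2
    obtain ⟨σ, hσ⟩ := exists_perm ![a, b] ![p.1, p.2] (inj2 hab) (inj2 hp')
    have h0 := hσ 0; have h1 := hσ 1
    simp only [Matrix.cons_val_zero, Matrix.cons_val_one, Matrix.head_cons] at h0 h1
    have e1 : (L.filter fun f => f p.1 = i ∧ f p.2 = j)
        = (L.filter fun f => (f ∘ σ) a = i ∧ (f ∘ σ) b = j) := by
      apply Finset.filter_congr; intro f _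
      simp [h0, h1]
    rw [e1]
    exact card_filter_comp σ (fun f => f a = i ∧ f b = j)
  have hsum : ∑ p ∈ D2, (L.filter fun f => f p.1 = i ∧ f p.2 = j).card
      = L.card * (n i * n j) := by
    calc ∑ p ∈ D2, (L.filter fun f => f p.1 = i ∧ f p.2 = j).card
        = ∑ p ∈ D2, ∑ f ∈ L, if f p.1 = i ∧ f p.2 = j then 1 else 0 :=
          Finset.sum_congr rfl fun p _ => Finset.card_filter _ _
      _ = ∑ f ∈ L, ∑ p ∈ D2, if f p.1 = i ∧ f p.2 = j then 1 else 0 := Finset.sum_comm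
      _ = ∑ f ∈ L, (D2.filter fun p => f p.1 = i ∧ f p.2 = j).card :=
          Finset.sum_congr rfl fun f _ => (Finset.card_filter _ _).symm
      _ = ∑ f ∈ L, n i * n j :=
          Finset.sum_congr rfl fun f hf => count2 (by exact hf) hij
      _ = L.card * (n i * n j) := by rw [Finset.sum_const, smul_eq_mul]
  calc (Fintype.card V * (Fintype.card V - 1)) *
      ((labelings n).filter fun f : V → Fin K => f a = i ∧ f b = j).card
      = D2.card * (L.filter fun f => f a = i ∧ f b = j).card := by rw [hcard]
    _ = ∑ p ∈ D2, (L.filter fun f => f a = i ∧ f b = j).card := by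
        rw [Finset.sum_const, smul_eq_mul]
    _ = ∑ p ∈ D2, (L.filter fun f => f p.1 = i ∧ f p.2 = j).card :=
        (Finset.sum_congr rfl hconst).symm
    _ = L.card * (n i * n j) := hsum

lemma key3 (n : Fin K → ℕ) {a b c : V} (hab : a ≠ b) (hac : a ≠ c) (hbc : b ≠ c)
    {i j k : Fin K} (hij : i ≠ j) (hik : i ≠ k) (hjk : j ≠ k) :
    (Fintype.card V * ((Fintype.card V - 1) * (Fintype.card V - 2))) *
      ((labelings n).filter fun f : V → Fin K => f a = i ∧ f b = j ∧ f c = k).card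
      = (labelings n : Finset (V → Fin K)).card * (n i * (n j * n k)) := by
  classical
  set L := (labelings n : Finset (V → Fin K)) with hL
  set D3 := ((univ ×ˢ univ ×ˢ univ : Finset (V × V × V)).filter fun p =>
    p.1 ≠ p.2.1 ∧ p.1 ≠ p.2.2 ∧ p.2.1 ≠ p.2.2) with hD3
  have hcard : D3.card = Fintype.card V * ((Fintype.card V - 1) * (Fintype.card V - 2)) := by
    rw [hD3, card_triples, Finset.card_univ]
  have hconst : ∀ p ∈ D3, ((L.filter fun f => f p.1 = i ∧ f p.2.1 = j ∧ f p.2.2 = k).card)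
      = (L.filter fun f => f a = i ∧ f b = j ∧ f c = k).card := by
    intro p hp
    have hp' : p.1 ≠ p.2.1 ∧ p.1 ≠ p.2.2 ∧ p.2.1 ≠ p.2.2 := by
      simp only [hD3, Finset.mem_filter] at hp; exact hp.2
    obtain ⟨σ, hσ⟩ := exists_perm ![a, b, c] ![p.1, p.2.1, p.2.2]
      (inj3 hab hac hbc) (inj3 hp'.1 hp'.2.1 hp'.2.2)
    have h0 := hσ 0; have h1 := hσ 1; have h2 := hσ 2
    simp only [Matrix.cons_val_zero, Matrix.cons_val_one, Matrix.head_cons,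
      Matrix.cons_val_two, Matrix.tail_cons] at h0 h1 h2
    have e1 : (L.filter fun f => f p.1 = i ∧ f p.2.1 = j ∧ f p.2.2 = k)
        = (L.filter fun f => (f ∘ σ) a = i ∧ (f ∘ σ) b = j ∧ (f ∘ σ) c = k) := by
      apply Finset.filter_congr; intro f _
      simp [h0, h1, h2]
    rw [e1]
    exact card_filter_comp σ (fun f => f a = i ∧ f b = j ∧ f c = k)
  have hsum : ∑ p ∈ D3, (L.filter fun f => f p.1 = i ∧ f p.2.1 = j ∧ f p.2.2 = k).card
      = L.card * (n i * (n j * n k)) := by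
    calc ∑ p ∈ D3, (L.filter fun f => f p.1 = i ∧ f p.2.1 = j ∧ f p.2.2 = k).card
        = ∑ p ∈ D3, ∑ f ∈ L, if f p.1 = i ∧ f p.2.1 = j ∧ f p.2.2 = k then 1 else 0 :=
          Finset.sum_congr rfl fun p _ => Finset.card_filter _ _
      _ = ∑ f ∈ L, ∑ p ∈ D3, if f p.1 = i ∧ f p.2.1 = j ∧ f p.2.2 = k then 1 else 0 :=
          Finset.sum_comm
      _ = ∑ f ∈ L, (D3.filter fun p => f p.1 = i ∧ f p.2.1 = j ∧ f p.2.2 = k).card :=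
          Finset.sum_congr rfl fun f _ => (Finset.card_filter _ _).symm
      _ = ∑ f ∈ L, n i * (n j * n k) :=
          Finset.sum_congr rfl fun f hf => count3 (by exact hf) hij hik hjk
      _ = L.card * (n i * (n j * n k)) := by rw [Finset.sum_const, smul_eq_mul]
  calc (Fintype.card V * ((Fintype.card V - 1) * (Fintype.card V - 2))) *
      ((labelings n).filter fun f : V → Fin K => f a = i ∧ f b = j ∧ f c = k).card
      = D3.card * (L.filter fun f => f a = i ∧ f b = j ∧ f c = k).card := by rw [hcard]
    _ = ∑ p ∈ D3, (L.filter fun f => f a = i ∧ f b = j ∧ f c = k).card := by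
        rw [Finset.sum_const, smul_eq_mul]
    _ = ∑ p ∈ D3, (L.filter fun f => f p.1 = i ∧ f p.2.1 = j ∧ f p.2.2 = k).card :=
        (Finset.sum_congr rfl hconst).symm
    _ = L.card * (n i * (n j * n k)) := hsum

lemma key4 (n : Fin K → ℕ) {a b c d : V} (hab : a ≠ b) (hac : a ≠ c) (had : a ≠ d)
    (hbc : b ≠ c) (hbd : b ≠ d) (hcd : c ≠ d)
    {i j k : Fin K} (hij : i ≠ j) (hik : i ≠ k) (hjk : j ≠ k) :
    (Fintype.card V * ((Fintype.card V - 1) * ((Fintype.card V - 2) * (Fintype.card V - 3)))) *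
      ((labelings n).filter fun f : V → Fin K =>
        f a = i ∧ f b = j ∧ f c = i ∧ f d = k).card
      = (labelings n : Finset (V → Fin K)).card * ((n i * (n i - 1)) * (n j * n k)) := by
  classical
  set L := (labelings n : Finset (V → Fin K)) with hL
  set D4 := ((univ ×ˢ univ ×ˢ univ ×ˢ univ : Finset (V × V × V × V)).filter fun p =>
    p.1 ≠ p.2.1 ∧ p.1 ≠ p.2.2.1 ∧ p.1 ≠ p.2.2.2 ∧
    p.2.1 ≠ p.2.2.1 ∧ p.2.1 ≠ p.2.2.2 ∧ p.2.2.1 ≠ p.2.2.2) with hD4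
  have hcard : D4.card = Fintype.card V *
      ((Fintype.card V - 1) * ((Fintype.card V - 2) * (Fintype.card V - 3))) := by
    rw [hD4, card_quads, Finset.card_univ]
  have hconst : ∀ p ∈ D4,
      ((L.filter fun f => f p.1 = i ∧ f p.2.1 = j ∧ f p.2.2.1 = i ∧ f p.2.2.2 = k).card)
      = (L.filter fun f => f a = i ∧ f b = j ∧ f c = i ∧ f d = k).card := by
    intro p hp
    have hp' : p.1 ≠ p.2.1 ∧ p.1 ≠ p.2.2.1 ∧ p.1 ≠ p.2.2.2 ∧
        p.2.1 ≠ p.2.2.1 ∧ p.2.1 ≠ p.2.2.2 ∧ p.2.2.1 ≠ p.2.2.2 := by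
      simp only [hD4, Finset.mem_filter] at hp; exact hp.2
    obtain ⟨σ, hσ⟩ := exists_perm ![a, b, c, d] ![p.1, p.2.1, p.2.2.1, p.2.2.2]
      (inj4 hab hac had hbc hbd hcd)
      (inj4 hp'.1 hp'.2.1 hp'.2.2.1 hp'.2.2.2.1 hp'.2.2.2.2.1 hp'.2.2.2.2.2)
    have h0 := hσ 0; have h1 := hσ 1; have h2 := hσ 2; have h3 := hσ 3
    simp only [Matrix.cons_val_zero, Matrix.cons_val_one, Matrix.head_cons,
      Matrix.cons_val_two, Matrix.tail_cons, Matrix.cons_val_three] at h0 h1 h2 h3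
    have e1 : (L.filter fun f => f p.1 = i ∧ f p.2.1 = j ∧ f p.2.2.1 = i ∧ f p.2.2.2 = k)
        = (L.filter fun f => (f ∘ σ) a = i ∧ (f ∘ σ) b = j ∧ (f ∘ σ) c = i ∧ (f ∘ σ) d = k) := by
      apply Finset.filter_congr; intro f _
      simp [h0, h1, h2, h3]
    rw [e1]
    exact card_filter_comp σ (fun f => f a = i ∧ f b = j ∧ f c = i ∧ f d = k)
  have hsum : ∑ p ∈ D4,
      (L.filter fun f => f p.1 = i ∧ f p.2.1 = j ∧ f p.2.2.1 = i ∧ f p.2.2.2 = k).card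
      = L.card * ((n i * (n i - 1)) * (n j * n k)) := by
    calc ∑ p ∈ D4,
        (L.filter fun f => f p.1 = i ∧ f p.2.1 = j ∧ f p.2.2.1 = i ∧ f p.2.2.2 = k).card
        = ∑ p ∈ D4, ∑ f ∈ L,
            if f p.1 = i ∧ f p.2.1 = j ∧ f p.2.2.1 = i ∧ f p.2.2.2 = k then 1 else 0 :=
          Finset.sum_congr rfl fun p _ => Finset.card_filter _ _
      _ = ∑ f ∈ L, ∑ p ∈ D4,
            if f p.1 = i ∧ f p.2.1 = j ∧ f p.2.2.1 = i ∧ f p.2.2.2 = k then 1 else 0 :=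
          Finset.sum_comm
      _ = ∑ f ∈ L,
            (D4.filter fun p => f p.1 = i ∧ f p.2.1 = j ∧ f p.2.2.1 = i ∧ f p.2.2.2 = k).card :=
          Finset.sum_congr rfl fun f _ => (Finset.card_filter _ _).symm
      _ = ∑ f ∈ L, (n i * (n i - 1)) * (n j * n k) :=
          Finset.sum_congr rfl fun f hf => count4 (by exact hf) hij hik hjk
      _ = L.card * ((n i * (n i - 1)) * (n j * n k)) := by rw [Finset.sum_const, smul_eq_mul]
  calc (Fintype.card V * ((Fintype.card V - 1) * ((Fintype.card V - 2) * (Fintype.card V - 3)))) *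
      ((labelings n).filter fun f : V → Fin K => f a = i ∧ f b = j ∧ f c = i ∧ f d = k).card
      = D4.card * (L.filter fun f => f a = i ∧ f b = j ∧ f c = i ∧ f d = k).card := by rw [hcard]
    _ = ∑ p ∈ D4, (L.filter fun f => f a = i ∧ f b = j ∧ f c = i ∧ f d = k).card := by
        rw [Finset.sum_const, smul_eq_mul]
    _ = ∑ p ∈ D4,
          (L.filter fun f => f p.1 = i ∧ f p.2.1 = j ∧ f p.2.2.1 = i ∧ f p.2.2.2 = k).card :=
        (Finset.sum_congr rfl hconst).symm
    _ = L.card * ((n i * (n i - 1)) * (n j * n k)) := hsum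

lemma edge_cnt (G : SimpleGraph V) [DecidableRel G.Adj] (n : Fin K → ℕ)
    {e : Sym2 V} (he : e ∈ G.edgeFinset) {c d : Fin K} (hcd : c ≠ d) :
    (Fintype.card V * (Fintype.card V - 1)) *
      ((labelings n).filter fun f : V → Fin K => Sym2.map f e = s(c, d)).card
      = (labelings n : Finset (V → Fin K)).card * (2 * (n c * n d)) := by
  classical
  induction e with
  | _ a b =>
    have hadj : G.Adj a b := by
      rw [SimpleGraph.mem_edgeFinset, SimpleGraph.mem_edgeSet] at he; exact he
    have hab : a ≠ b := hadj.ne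
    have hsplit : ((labelings n).filter fun f : V → Fin K => Sym2.map f s(a, b) = s(c, d))
        = ((labelings n).filter fun f : V → Fin K => f a = c ∧ f b = d) ∪
          ((labelings n).filter fun f : V → Fin K => f a = d ∧ f b = c) := by
      rw [← Finset.filter_or]
      apply Finset.filter_congr
      intro f _
      rw [Sym2.map_pair_eq, Sym2.eq_iff]
    rw [hsplit, Finset.card_union_of_disjoint, Nat.mul_add, key2 n hab hcd,
      key2 n hab (Ne.symm hcd)]
    · ring
    · rw [Finset.disjoint_left]
      rintro f hf1 hf2
      simp only [Finset.mem_filter] at hf1 hf2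
      exact hcd (hf1.2.1.symm.trans hf2.2.1)


lemma pair_diag (n : Fin K → ℕ) (e : Sym2 V) {i j k : Fin K} (hjk : j ≠ k) :
    ((labelings n).filter fun f : V → Fin K =>
      Sym2.map f e = s(i, j) ∧ Sym2.map f e = s(i, k)).card = 0 := by
  rw [Finset.card_eq_zero, Finset.filter_eq_empty_iff]
  rintro f _ ⟨h1, h2⟩
  rw [h1] at h2
  rw [Sym2.eq_iff] at h2
  rcases h2 with ⟨-, h⟩ | ⟨h, h'⟩
  · exact hjk h
  · exact hjk (h'.trans h)

lemma pair_share (G : SimpleGraph V) [DecidableRel G.Adj] (n : Fin K → ℕ)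
    {e1 e2 : Sym2 V} (he1 : e1 ∈ G.edgeFinset) (he2 : e2 ∈ G.edgeFinset)
    (hne : e1 ≠ e2) {v : V} (hv1 : v ∈ e1) (hv2 : v ∈ e2)
    {i j k : Fin K} (hij : i ≠ j) (hik : i ≠ k) (hjk : j ≠ k) :
    (Fintype.card V * ((Fintype.card V - 1) * (Fintype.card V - 2))) *
      ((labelings n).filter fun f : V → Fin K =>
        Sym2.map f e1 = s(i, j) ∧ Sym2.map f e2 = s(i, k)).card
      = (labelings n : Finset (V → Fin K)).card * (n i * (n j * n k)) := by
  classical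
  obtain ⟨u, rfl⟩ := Sym2.mem_iff_exists.mp hv1
  obtain ⟨w, rfl⟩ := Sym2.mem_iff_exists.mp hv2
  have hvu : v ≠ u := (G.mem_edgeSet.mp (SimpleGraph.mem_edgeFinset.mp he1)).ne
  have hvw : v ≠ w := (G.mem_edgeSet.mp (SimpleGraph.mem_edgeFinset.mp he2)).ne
  have huw : u ≠ w := fun h => hne (by rw [h])
  have hpred : ((labelings n).filter fun f : V → Fin K =>
      Sym2.map f s(v, u) = s(i, j) ∧ Sym2.map f s(v, w) = s(i, k))
      = ((labelings n).filter fun f : V → Fin K => f v = i ∧ f u = j ∧ f w = k) := by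
    apply Finset.filter_congr
    intro f _
    rw [Sym2.map_pair_eq, Sym2.map_pair_eq, Sym2.eq_iff, Sym2.eq_iff]
    constructor
    · rintro ⟨⟨h1, h2⟩ | ⟨h1, h2⟩, ⟨h3, h4⟩ | ⟨h3, h4⟩⟩
      · exact ⟨h1, h2, h4⟩
      · exact absurd (h1.symm.trans h3) hik
      · exact absurd (h1.symm.trans h3) (Ne.symm hij)
      · exact absurd (h1.symm.trans h3) hjk
    · rintro ⟨h1, h2, h3⟩
      exact ⟨Or.inl ⟨h1, h2⟩, Or.inl ⟨h1, h3⟩⟩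
  rw [hpred]
  exact key3 n hvu hvw huw hij hik hjk

lemma pair_disj (G : SimpleGraph V) [DecidableRel G.Adj] (n : Fin K → ℕ)
    {e1 e2 : Sym2 V} (he1 : e1 ∈ G.edgeFinset) (he2 : e2 ∈ G.edgeFinset)
    (hdisj : ¬ ∃ v, v ∈ e1 ∧ v ∈ e2)
    {i j k : Fin K} (hij : i ≠ j) (hik : i ≠ k) (hjk : j ≠ k) :
    (Fintype.card V * ((Fintype.card V - 1) * ((Fintype.card V - 2) * (Fintype.card V - 3)))) *
      ((labelings n).filter fun f : V → Fin K =>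
        Sym2.map f e1 = s(i, j) ∧ Sym2.map f e2 = s(i, k)).card
      = (labelings n : Finset (V → Fin K)).card *
          (4 * ((n i * (n i - 1)) * (n j * n k))) := by
  classical
  induction e1 with
  | _ a b =>
  induction e2 with
  | _ c d =>
    have hab : a ≠ b := (G.mem_edgeSet.mp (SimpleGraph.mem_edgeFinset.mp he1)).ne
    have hcd : c ≠ d := (G.mem_edgeSet.mp (SimpleGraph.mem_edgeFinset.mp he2)).ne
    have hac : a ≠ c := fun h => hdisj ⟨a, Sym2.mem_mk_left a b, h ▸ Sym2.mem_mk_left c d⟩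
    have had : a ≠ d := fun h => hdisj ⟨a, Sym2.mem_mk_left a b, h ▸ Sym2.mem_mk_right c d⟩
    have hbc : b ≠ c := fun h => hdisj ⟨b, Sym2.mem_mk_right a b, h ▸ Sym2.mem_mk_left c d⟩
    have hbd : b ≠ d := fun h => hdisj ⟨b, Sym2.mem_mk_right a b, h ▸ Sym2.mem_mk_right c d⟩
    set L := (labelings n : Finset (V → Fin K)) with hL
    have hsplit : (L.filter fun f : V → Fin K =>
        Sym2.map f s(a, b) = s(i, j) ∧ Sym2.map f s(c, d) = s(i, k))
        = ((L.filter fun f : V → Fin K => f a = i ∧ f b = j ∧ f c = i ∧ f d = k) ∪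
           (L.filter fun f : V → Fin K => f a = i ∧ f b = j ∧ f d = i ∧ f c = k)) ∪
          ((L.filter fun f : V → Fin K => f b = i ∧ f a = j ∧ f c = i ∧ f d = k) ∪
           (L.filter fun f : V → Fin K => f b = i ∧ f a = j ∧ f d = i ∧ f c = k)) := by
      rw [← Finset.filter_or, ← Finset.filter_or, ← Finset.filter_or]
      apply Finset.filter_congr
      intro f _
      rw [Sym2.map_pair_eq, Sym2.map_pair_eq, Sym2.eq_iff, Sym2.eq_iff]
      constructor
      · rintro ⟨h1 | h1, h2 | h2⟩
        · exact Or.inl (Or.inl ⟨h1.1, h1.2, h2.1, h2.2⟩)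
        · exact Or.inl (Or.inr ⟨h1.1, h1.2, h2.2, h2.1⟩)
        · exact Or.inr (Or.inl ⟨h1.2, h1.1, h2.1, h2.2⟩)
        · exact Or.inr (Or.inr ⟨h1.2, h1.1, h2.2, h2.1⟩)
      · rintro ((h | h) | (h | h))
        · exact ⟨Or.inl ⟨h.1, h.2.1⟩, Or.inl ⟨h.2.2.1, h.2.2.2⟩⟩
        · exact ⟨Or.inl ⟨h.1, h.2.1⟩, Or.inr ⟨h.2.2.2, h.2.2.1⟩⟩
        · exact ⟨Or.inr ⟨h.2.1, h.1⟩, Or.inl ⟨h.2.2.1, h.2.2.2⟩⟩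
        · exact ⟨Or.inr ⟨h.2.1, h.1⟩, Or.inr ⟨h.2.2.2, h.2.2.1⟩⟩
    have d1 : ∀ (p q : (V → Fin K) → Prop) [DecidablePred p] [DecidablePred q]
        (x : V) (c1 c2 : Fin K), c1 ≠ c2 →
        (∀ f, p f → f x = c1) → (∀ f, q f → f x = c2) →
        Disjoint (L.filter p) (L.filter q) := by
      intro p q _ _ x c1 c2 hc hp hq
      rw [Finset.disjoint_left]
      intro f hf1 hf2
      simp only [Finset.mem_filter] at hf1 hf2
      exact hc ((hp f hf1.2).symm.trans (hq f hf2.2))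
    have hd12 : Disjoint (L.filter fun f : V → Fin K => f a = i ∧ f b = j ∧ f c = i ∧ f d = k)
        (L.filter fun f : V → Fin K => f a = i ∧ f b = j ∧ f d = i ∧ f c = k) :=
      d1 _ _ c i k hik (fun f hf => hf.2.2.1) (fun f hf => hf.2.2.2)
    have hd34 : Disjoint (L.filter fun f : V → Fin K => f b = i ∧ f a = j ∧ f c = i ∧ f d = k)
        (L.filter fun f : V → Fin K => f b = i ∧ f a = j ∧ f d = i ∧ f c = k) :=
      d1 _ _ c i k hik (fun f hf => hf.2.2.1) (fun f hf => hf.2.2.2)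
    have hdT : Disjoint
        ((L.filter fun f : V → Fin K => f a = i ∧ f b = j ∧ f c = i ∧ f d = k) ∪
         (L.filter fun f : V → Fin K => f a = i ∧ f b = j ∧ f d = i ∧ f c = k))
        ((L.filter fun f : V → Fin K => f b = i ∧ f a = j ∧ f c = i ∧ f d = k) ∪
         (L.filter fun f : V → Fin K => f b = i ∧ f a = j ∧ f d = i ∧ f c = k)) := by
      rw [Finset.disjoint_union_left]
      constructor <;> rw [Finset.disjoint_union_right] <;> constructor <;>
        exact d1 _ _ a i j hij (fun f hf => hf.1) (fun f hf => hf.2.1)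
    rw [hsplit, Finset.card_union_of_disjoint hdT, Finset.card_union_of_disjoint hd12,
      Finset.card_union_of_disjoint hd34, Nat.mul_add, Nat.mul_add, Nat.mul_add,
      key4 n hab hac had hbc hbd hcd hij hik hjk,
      key4 n hab had hac hbd hbc (Ne.symm hcd) hij hik hjk,
      key4 n (Ne.symm hab) hbc hbd hac had hcd hij hik hjk,
      key4 n (Ne.symm hab) hbd hbc had hac (Ne.symm hcd) hij hik hjk]
    ring


lemma card_pdiag (G : SimpleGraph V) [DecidableRel G.Adj] :
    ((G.edgeFinset ×ˢ G.edgeFinset).filter fun q => q.1 = q.2).card = G.edgeFinset.card := by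
  apply Finset.card_nbij' (fun q => q.1) (fun e => (e, e))
  · intro q hq
    simp only [Finset.mem_coe, Finset.mem_filter, Finset.mem_product] at hq
    exact hq.1.1
  · intro e he
    simp only [Finset.mem_coe, Finset.mem_filter, Finset.mem_product]
    exact ⟨⟨he, he⟩, trivial⟩
  · intro q hq
    simp only [Finset.mem_coe, Finset.mem_filter] at hq
    exact Prod.ext rfl hq.2
  · intro e _
    rfl

lemma card_pshare (G : SimpleGraph V) [DecidableRel G.Adj] :
    ((G.edgeFinset ×ˢ G.edgeFinset).filter fun q =>
      ¬ q.1 = q.2 ∧ ∃ v, v ∈ q.1 ∧ v ∈ q.2).card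
      = ∑ v : V, G.degree v * (G.degree v - 1) := by
  have h : ((G.edgeFinset ×ˢ G.edgeFinset).filter fun q =>
      ¬ q.1 = q.2 ∧ ∃ v, v ∈ q.1 ∧ v ∈ q.2)
      = univ.biUnion fun v => (G.incidenceFinset v).offDiag := by
    ext q
    simp only [Finset.mem_filter, Finset.mem_product, Finset.mem_biUnion, Finset.mem_univ,
      true_and, Finset.mem_offDiag, SimpleGraph.mem_incidenceFinset,
      SimpleGraph.incidenceSet, Set.mem_setOf_eq, SimpleGraph.mem_edgeFinset]
    constructor
    · rintro ⟨⟨h1, h2⟩, hne, v, hv1, hv2⟩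
      exact ⟨v, ⟨⟨h1, hv1⟩, ⟨h2, hv2⟩, hne⟩⟩
    · rintro ⟨v, ⟨⟨h1, hv1⟩, ⟨h2, hv2⟩, hne⟩⟩
      exact ⟨⟨h1, h2⟩, hne, v, hv1, hv2⟩
  rw [h, Finset.card_biUnion]
  · refine Finset.sum_congr rfl fun v _ => ?_
    rw [card_offDiag', SimpleGraph.card_incidenceFinset_eq_degree]
  · intro v _ w _ hvw
    simp only [Function.onFun]
    rw [Finset.disjoint_left]
    intro q hq1 hq2
    simp only [Finset.mem_offDiag, SimpleGraph.mem_incidenceFinset,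
      SimpleGraph.incidenceSet, Set.mem_setOf_eq] at hq1 hq2
    have h1 : q.1 = s(v, w) := (Sym2.mem_and_mem_iff hvw).mp ⟨hq1.1.2, hq2.1.2⟩
    have h2 : q.2 = s(v, w) := (Sym2.mem_and_mem_iff hvw).mp ⟨hq1.2.1.2, hq2.2.1.2⟩
    exact hq1.2.2 (h1.trans h2.symm)

lemma card_psplit (G : SimpleGraph V) [DecidableRel G.Adj] :
    G.edgeFinset.card * G.edgeFinset.card
      = ((G.edgeFinset ×ˢ G.edgeFinset).filter fun q => q.1 = q.2).card
        + ((G.edgeFinset ×ˢ G.edgeFinset).filter fun q =>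
            ¬ q.1 = q.2 ∧ ∃ v, v ∈ q.1 ∧ v ∈ q.2).card
        + ((G.edgeFinset ×ˢ G.edgeFinset).filter fun q =>
            ¬ ∃ v, v ∈ q.1 ∧ v ∈ q.2).card := by
  have hcongr : ((G.edgeFinset ×ˢ G.edgeFinset).filter fun q =>
      ¬ q.1 = q.2 ∧ ¬ ∃ v, v ∈ q.1 ∧ v ∈ q.2)
      = (G.edgeFinset ×ˢ G.edgeFinset).filter fun q => ¬ ∃ v, v ∈ q.1 ∧ v ∈ q.2 := by
    apply Finset.filter_congr
    intro q _
    constructor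
    · rintro ⟨-, h⟩; exact h
    · intro h
      refine ⟨fun he => h ⟨q.1.out.1, Sym2.out_fst_mem q.1, ?_⟩, h⟩
      rw [← he]; exact Sym2.out_fst_mem q.1
  have h0 : ((G.edgeFinset ×ˢ G.edgeFinset).filter fun q => ¬ q.1 = q.2).card
      = ((G.edgeFinset ×ˢ G.edgeFinset).filter fun q =>
          ¬ q.1 = q.2 ∧ ∃ v, v ∈ q.1 ∧ v ∈ q.2).card
        + ((G.edgeFinset ×ˢ G.edgeFinset).filter fun q =>
            ¬ ∃ v, v ∈ q.1 ∧ v ∈ q.2).card := by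
    rw [← Finset.card_filter_add_card_filter_not
      (s := (G.edgeFinset ×ˢ G.edgeFinset).filter fun q => ¬ q.1 = q.2)
      (p := fun q => ∃ v, v ∈ q.1 ∧ v ∈ q.2),
      Finset.filter_filter, Finset.filter_filter, hcongr]
  rw [← Finset.card_product (s := G.edgeFinset),
    ← Finset.card_filter_add_card_filter_not
      (s := G.edgeFinset ×ˢ G.edgeFinset) (p := fun q => q.1 = q.2), h0, add_assoc]


lemma pdisj_congr (G : SimpleGraph V) [DecidableRel G.Adj] :
    ((G.edgeFinset ×ˢ G.edgeFinset).filter fun q =>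
      ¬ q.1 = q.2 ∧ ¬ ∃ v, v ∈ q.1 ∧ v ∈ q.2)
      = (G.edgeFinset ×ˢ G.edgeFinset).filter fun q => ¬ ∃ v, v ∈ q.1 ∧ v ∈ q.2 := by
  apply Finset.filter_congr
  intro q _
  constructor
  · rintro ⟨-, h⟩; exact h
  · intro h
    refine ⟨fun he => h ⟨q.1.out.1, Sym2.out_fst_mem q.1, ?_⟩, h⟩
    rw [← he]; exact Sym2.out_fst_mem q.1

lemma moment1 (G : SimpleGraph V) [DecidableRel G.Adj] (n : Fin K → ℕ) {c d : Fin K}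
    (hcd : c ≠ d) :
    (Fintype.card V * (Fintype.card V - 1)) * (∑ f ∈ labelings n, Rcount G f c d)
      = G.edgeFinset.card *
          ((labelings n : Finset (V → Fin K)).card * (2 * (n c * n d))) := by
  have hswap : ∑ f ∈ labelings n, Rcount G f c d
      = ∑ e ∈ G.edgeFinset,
          ((labelings n).filter fun f : V → Fin K => Sym2.map f e = s(c, d)).card := by
    calc ∑ f ∈ labelings n, Rcount G f c d
        = ∑ f ∈ labelings n, ∑ e ∈ G.edgeFinset,
            if Sym2.map f e = s(c, d) then 1 else 0 :=
          Finset.sum_congr rfl fun f _ => Finset.card_filter _ _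
      _ = ∑ e ∈ G.edgeFinset, ∑ f ∈ labelings n,
            if Sym2.map f e = s(c, d) then 1 else 0 := Finset.sum_comm
      _ = _ := Finset.sum_congr rfl fun e _ => (Finset.card_filter _ _).symm
  rw [hswap, Finset.mul_sum,
    Finset.sum_congr rfl fun e he => edge_cnt G n he hcd,
    Finset.sum_const, smul_eq_mul]

lemma moment2 (G : SimpleGraph V) [DecidableRel G.Adj] (n : Fin K → ℕ) {i j k : Fin K}
    (hij : i ≠ j) (hik : i ≠ k) (hjk : j ≠ k) :
    (Fintype.card V * ((Fintype.card V - 1) * ((Fintype.card V - 2) * (Fintype.card V - 3)))) *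
      (∑ f ∈ labelings n, Rcount G f i j * Rcount G f i k)
      = ((G.edgeFinset ×ˢ G.edgeFinset).filter fun q =>
            ¬ q.1 = q.2 ∧ ∃ v, v ∈ q.1 ∧ v ∈ q.2).card
          * ((Fintype.card V - 3) *
              ((labelings n : Finset (V → Fin K)).card * (n i * (n j * n k))))
        + ((G.edgeFinset ×ˢ G.edgeFinset).filter fun q => ¬ ∃ v, v ∈ q.1 ∧ v ∈ q.2).card
          * ((labelings n : Finset (V → Fin K)).card *
              (4 * ((n i * (n i - 1)) * (n j * n k)))) := by
  classical
  have hswap : ∑ f ∈ labelings n, Rcount G f i j * Rcount G f i k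
      = ∑ q ∈ G.edgeFinset ×ˢ G.edgeFinset,
          ((labelings n).filter fun f : V → Fin K =>
            Sym2.map f q.1 = s(i, j) ∧ Sym2.map f q.2 = s(i, k)).card := by
    calc ∑ f ∈ labelings n, Rcount G f i j * Rcount G f i k
        = ∑ f ∈ labelings n, ∑ q ∈ G.edgeFinset ×ˢ G.edgeFinset,
            if Sym2.map f q.1 = s(i, j) ∧ Sym2.map f q.2 = s(i, k) then 1 else 0 := by
          refine Finset.sum_congr rfl fun f _ => ?_
          rw [Rcount, Rcount, Finset.card_filter, Finset.card_filter, Finset.sum_mul_sum,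
            Finset.sum_product]
          refine Finset.sum_congr rfl fun e _ => Finset.sum_congr rfl fun e' _ => ?_
          by_cases h1 : Sym2.map f e = s(i, j) <;>
            by_cases h2 : Sym2.map f e' = s(i, k) <;> simp [h1, h2]
      _ = ∑ q ∈ G.edgeFinset ×ˢ G.edgeFinset, ∑ f ∈ labelings n,
            if Sym2.map f q.1 = s(i, j) ∧ Sym2.map f q.2 = s(i, k) then 1 else 0 :=
          Finset.sum_comm
      _ = _ := Finset.sum_congr rfl fun q _ => (Finset.card_filter _ _).symm
  have hsplit : ∑ q ∈ G.edgeFinset ×ˢ G.edgeFinset,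
        ((labelings n).filter fun f : V → Fin K =>
          Sym2.map f q.1 = s(i, j) ∧ Sym2.map f q.2 = s(i, k)).card
      = ∑ q ∈ (G.edgeFinset ×ˢ G.edgeFinset).filter fun q => q.1 = q.2,
          ((labelings n).filter fun f : V → Fin K =>
            Sym2.map f q.1 = s(i, j) ∧ Sym2.map f q.2 = s(i, k)).card
        + (∑ q ∈ (G.edgeFinset ×ˢ G.edgeFinset).filter fun q =>
              ¬ q.1 = q.2 ∧ ∃ v, v ∈ q.1 ∧ v ∈ q.2,
            ((labelings n).filter fun f : V → Fin K =>
              Sym2.map f q.1 = s(i, j) ∧ Sym2.map f q.2 = s(i, k)).card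
          + ∑ q ∈ (G.edgeFinset ×ˢ G.edgeFinset).filter fun q => ¬ ∃ v, v ∈ q.1 ∧ v ∈ q.2,
              ((labelings n).filter fun f : V → Fin K =>
                Sym2.map f q.1 = s(i, j) ∧ Sym2.map f q.2 = s(i, k)).card) := by
    rw [← Finset.sum_filter_add_sum_filter_not (G.edgeFinset ×ˢ G.edgeFinset)
      (fun q => q.1 = q.2)]
    congr 1
    rw [← Finset.sum_filter_add_sum_filter_not
      ((G.edgeFinset ×ˢ G.edgeFinset).filter fun q => ¬ q.1 = q.2)
      (fun q => ∃ v, v ∈ q.1 ∧ v ∈ q.2), Finset.filter_filter, Finset.filter_filter,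
      pdisj_congr]
  rw [hswap, hsplit, Nat.mul_add, Nat.mul_add, Finset.mul_sum, Finset.mul_sum,
    Finset.mul_sum]
  have hS1 : ∑ q ∈ (G.edgeFinset ×ˢ G.edgeFinset).filter fun q => q.1 = q.2,
      (Fintype.card V * ((Fintype.card V - 1) * ((Fintype.card V - 2) * (Fintype.card V - 3)))) *
        ((labelings n).filter fun f : V → Fin K =>
          Sym2.map f q.1 = s(i, j) ∧ Sym2.map f q.2 = s(i, k)).card = 0 := by
    refine Finset.sum_eq_zero fun q hq => ?_
    simp only [Finset.mem_filter] at hq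
    have h2 := hq.2
    rw [← h2, pair_diag n q.1 (i := i) hjk, Nat.mul_zero]
  have hS2 : ∑ q ∈ (G.edgeFinset ×ˢ G.edgeFinset).filter fun q =>
      ¬ q.1 = q.2 ∧ ∃ v, v ∈ q.1 ∧ v ∈ q.2,
      (Fintype.card V * ((Fintype.card V - 1) * ((Fintype.card V - 2) * (Fintype.card V - 3)))) *
        ((labelings n).filter fun f : V → Fin K =>
          Sym2.map f q.1 = s(i, j) ∧ Sym2.map f q.2 = s(i, k)).card
      = ((G.edgeFinset ×ˢ G.edgeFinset).filter fun q =>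
          ¬ q.1 = q.2 ∧ ∃ v, v ∈ q.1 ∧ v ∈ q.2).card
        * ((Fintype.card V - 3) *
            ((labelings n : Finset (V → Fin K)).card * (n i * (n j * n k)))) := by
    rw [Finset.sum_congr rfl (fun q hq => ?_), Finset.sum_const, smul_eq_mul]
    simp only [Finset.mem_filter, Finset.mem_product] at hq
    obtain ⟨⟨hq1, hq2⟩, hne, v, hv1, hv2⟩ := hq
    calc (Fintype.card V * ((Fintype.card V - 1) * ((Fintype.card V - 2) * (Fintype.card V - 3)))) *
        ((labelings n).filter fun f : V → Fin K =>
          Sym2.map f q.1 = s(i, j) ∧ Sym2.map f q.2 = s(i, k)).card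
        = (Fintype.card V - 3) *
            ((Fintype.card V * ((Fintype.card V - 1) * (Fintype.card V - 2))) *
              ((labelings n).filter fun f : V → Fin K =>
                Sym2.map f q.1 = s(i, j) ∧ Sym2.map f q.2 = s(i, k)).card) := by ring
      _ = (Fintype.card V - 3) *
            ((labelings n : Finset (V → Fin K)).card * (n i * (n j * n k))) := by
          rw [pair_share G n hq1 hq2 hne hv1 hv2 hij hik hjk]
  have hS3 : ∑ q ∈ (G.edgeFinset ×ˢ G.edgeFinset).filter fun q => ¬ ∃ v, v ∈ q.1 ∧ v ∈ q.2,
      (Fintype.card V * ((Fintype.card V - 1) * ((Fintype.card V - 2) * (Fintype.card V - 3)))) *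
        ((labelings n).filter fun f : V → Fin K =>
          Sym2.map f q.1 = s(i, j) ∧ Sym2.map f q.2 = s(i, k)).card
      = ((G.edgeFinset ×ˢ G.edgeFinset).filter fun q => ¬ ∃ v, v ∈ q.1 ∧ v ∈ q.2).card
        * ((labelings n : Finset (V → Fin K)).card *
            (4 * ((n i * (n i - 1)) * (n j * n k)))) := by
    rw [Finset.sum_congr rfl (fun q hq => ?_), Finset.sum_const, smul_eq_mul]
    simp only [Finset.mem_filter, Finset.mem_product] at hq
    obtain ⟨⟨hq1, hq2⟩, hdisj⟩ := hq
    exact pair_disj G n hq1 hq2 hdisj hij hik hjk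
  rw [hS1, hS2, hS3, zero_add]




lemma covar_eq (n : Fin K → ℕ) (h : ((labelings n : Finset (V → Fin K)).card : ℝ) ≠ 0)
    (X Y : (V → Fin K) → ℝ) :
    covar n X Y = expect n (fun f => X f * Y f) - expect n X * expect n Y := by
  simp only [covar, _root_.expect]
  set T := ((labelings n : Finset (V → Fin K)).card : ℝ) with hT
  set SX := ∑ f ∈ labelings n, X f with hSX
  set SY := ∑ f ∈ labelings n, Y f with hSY
  have expand : ∀ f ∈ labelings n, (X f - SX / T) * (Y f - SY / T)
      = X f * Y f - SX / T * Y f - SY / T * X f + SX / T * (SY / T) := fun f _ => by ring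
  rw [Finset.sum_congr rfl expand, Finset.sum_add_distrib, Finset.sum_sub_distrib,
    Finset.sum_sub_distrib, ← Finset.mul_sum, ← Finset.mul_sum, Finset.sum_const,
    nsmul_eq_mul, ← hT, ← hSX, ← hSY]
  field_simp
  ring

lemma cast_mul_pred (a : ℕ) : ((a * (a - 1) : ℕ) : ℝ) = (a : ℝ) * ((a : ℝ) - 1) := by
  rcases a with _ | b
  · simp
  · push_cast [Nat.succ_sub_one]
    ring


theorem stmt_13 (G : SimpleGraph V) [DecidableRel G.Adj]
    (n : Fin K → ℕ) (N : ℕ) (hN : N = Fintype.card V) (hN4 : 4 ≤ N)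
    (hsum : ∑ k, n k = N) (i j k : Fin K) (hij : i ≠ j) (hik : i ≠ k) (hjk : j ≠ k)
    (m D : ℝ) (hm : m = (G.edgeFinset.card : ℝ))
    (hD : D = ∑ t : V, (G.degree t : ℝ) ^ 2) :
    covar n (fun f : V → Fin K => (Rcount G f i j : ℝ))
        (fun f : V → Fin K => (Rcount G f i k : ℝ))
      = (D - 2 * m) * ((n i : ℝ) * (n j : ℝ) * (n k : ℝ)
            / ((N : ℝ) * ((N : ℝ) - 1) * ((N : ℝ) - 2)))
        + (m ^ 2 - D + m) * (4 * (n i : ℝ) * (n j : ℝ) * (n k : ℝ) * ((n i : ℝ) - 1)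
            / ((N : ℝ) * ((N : ℝ) - 1) * ((N : ℝ) - 2) * ((N : ℝ) - 3)))
        - (2 * m * (n i : ℝ) * (n j : ℝ) / ((N : ℝ) * ((N : ℝ) - 1)))
          * (2 * m * (n i : ℝ) * (n k : ℝ) / ((N : ℝ) * ((N : ℝ) - 1))) := by
  classical
  obtain ⟨N', rfl⟩ : ∃ N'', N = N'' + 4 := ⟨N - 4, by omega⟩
  have hNV : Fintype.card V = N' + 4 := hN.symm
  have hT0 : 0 < (labelings n : Finset (V → Fin K)).card :=
    Finset.card_pos.mpr (labelings_nonempty (by rw [hsum, hN]))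
  have hT : ((labelings n : Finset (V → Fin K)).card : ℝ) ≠ 0 :=
    Nat.cast_ne_zero.mpr hT0.ne'
  have hNr : (0:ℝ) < (N' : ℝ) + 1 := by positivity
  have d1 : N' + 4 - 1 = N' + 3 := by omega
  have d2 : N' + 4 - 2 = N' + 2 := by omega
  have d3 : N' + 4 - 3 = N' + 1 := by omega
  -- first moments
  have e1 : ∀ {c : Fin K}, i ≠ c →
      _root_.expect n (fun f : V → Fin K => (Rcount G f i c : ℝ))
        = 2 * m * (n i : ℝ) * (n c : ℝ) / (((N' + 4 : ℕ) : ℝ) * (((N' + 4 : ℕ) : ℝ) - 1)) := by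
    intro c hc
    have h := moment1 G n hc
    rw [hNV, d1] at h
    have hr := congrArg (fun t : ℕ => (t : ℝ)) h
    push_cast at hr
    simp only [_root_.expect]
    have hsc : (∑ f ∈ labelings n, (Rcount G f i c : ℝ))
        = ((∑ f ∈ labelings n, Rcount G f i c : ℕ) : ℝ) := by push_cast; rfl
    rw [hsc, div_eq_div_iff hT (by push_cast; nlinarith)]
    push_cast
    rw [hm]
    linear_combination hr
  -- edge pair cardinality casts
  have hPsh : (((G.edgeFinset ×ˢ G.edgeFinset).filter fun q =>
        ¬ q.1 = q.2 ∧ ∃ v, v ∈ q.1 ∧ v ∈ q.2).card : ℝ) = D - 2 * m := by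
    rw [card_pshare, Nat.cast_sum, Finset.sum_congr rfl fun v _ => cast_mul_pred (G.degree v)]
    have hdeg : ∑ v : V, (G.degree v : ℝ) = 2 * m := by
      rw [hm]
      exact_mod_cast congrArg (fun t : ℕ => (t : ℝ))
        (SimpleGraph.sum_degrees_eq_twice_card_edges G)
    have hexp : ∀ v ∈ (univ : Finset V), (G.degree v : ℝ) * ((G.degree v : ℝ) - 1)
        = (G.degree v : ℝ) ^ 2 - (G.degree v : ℝ) := fun v _ => by ring
    rw [Finset.sum_congr rfl hexp, Finset.sum_sub_distrib, hdeg, ← hD]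
  have hPd : (((G.edgeFinset ×ˢ G.edgeFinset).filter fun q =>
        ¬ ∃ v, v ∈ q.1 ∧ v ∈ q.2).card : ℝ) = m ^ 2 - m - (D - 2 * m) := by
    have h := card_psplit G
    rw [card_pdiag] at h
    have hr := congrArg (fun t : ℕ => (t : ℝ)) h
    push_cast at hr
    rw [hPsh] at hr
    rw [hm] at *
    nlinarith [hr]
  -- second moment
  have e3 : _root_.expect n (fun f : V → Fin K =>
        (Rcount G f i j : ℝ) * (Rcount G f i k : ℝ))
      = (D - 2 * m) * ((n i : ℝ) * (n j : ℝ) * (n k : ℝ)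
            / (((N' + 4 : ℕ) : ℝ) * ((((N' + 4 : ℕ) : ℝ)) - 1) * ((((N' + 4 : ℕ) : ℝ)) - 2)))
        + (m ^ 2 - D + m) * (4 * (n i : ℝ) * (n j : ℝ) * (n k : ℝ) * ((n i : ℝ) - 1)
            / (((N' + 4 : ℕ) : ℝ) * ((((N' + 4 : ℕ) : ℝ)) - 1) * ((((N' + 4 : ℕ) : ℝ)) - 2)
                * ((((N' + 4 : ℕ) : ℝ)) - 3))) := by
    have h := moment2 G n hij hik hjk
    rw [hNV, d1, d2, d3] at h
    simp only [_root_.expect]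
    have hsc : (∑ f ∈ labelings n, (Rcount G f i j : ℝ) * (Rcount G f i k : ℝ))
        = ((∑ f ∈ labelings n, Rcount G f i j * Rcount G f i k : ℕ) : ℝ) := by push_cast; rfl
    rw [hsc]
    rcases Nat.eq_zero_or_pos (n i) with h0 | hpos
    · -- n i = 0 : everything vanishes
      rw [h0] at h
      simp only [Nat.zero_mul, Nat.mul_zero, zero_mul, mul_zero, Nat.zero_sub] at h
      have hz : (∑ f ∈ labelings n, Rcount G f i j * Rcount G f i k : ℕ) = 0 := by
        have hpos4 : 0 < (N' + 4) * ((N' + 3) * ((N' + 2) * (N' + 1))) := by positivity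
        exact (Nat.mul_eq_zero.mp h).resolve_left hpos4.ne'
      rw [hz, h0]
      simp
    · obtain ⟨a, ha⟩ : ∃ a, n i = a + 1 := ⟨n i - 1, by omega⟩
      rw [ha] at h
      have d4 : a + 1 - 1 = a := by omega
      rw [d4] at h
      have hr := congrArg (fun t : ℕ => (t : ℝ)) h
      push_cast at hr
      rw [hPsh, hPd] at hr
      rw [ha]
      rw [hsc] at hr
      rw [div_eq_iff hT]
      have hN4r : ((N' : ℝ) + 4) * (((N' : ℝ) + 3) * (((N' : ℝ) + 2) * ((N' : ℝ) + 1))) ≠ 0 := by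
        positivity
      apply mul_left_cancel₀ hN4r
      rw [hr]
      push_cast
      have r1 : ((N' : ℝ) + 4) - 1 = (N' : ℝ) + 3 := by ring
      have r2 : ((N' : ℝ) + 4) - 2 = (N' : ℝ) + 2 := by ring
      have r3 : ((N' : ℝ) + 4) - 3 = (N' : ℝ) + 1 := by ring
      rw [r1, r2, r3]
      have z1 : ((N' : ℝ) + 4) ≠ 0 := by positivity
      have z2 : ((N' : ℝ) + 3) ≠ 0 := by positivity
      have z3 : ((N' : ℝ) + 2) ≠ 0 := by positivity
      have z4 : ((N' : ℝ) + 1) ≠ 0 := by positivity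
      field_simp
      ring
  -- assemble
  rw [covar_eq n hT, e3, e1 hij, e1 hik]
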